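/- arXiv:1707.08389 — 4 statements merged into one kernel-verified Lean document; each statement's English description precedes it below -/
import Mathlib

section
/- Two positive braid words are equal in B_3 if and only if one can be obtained from the other by successively applying the relation σ₁σ₂σ₁ = σ₂σ₁σ₂ (i.e., by replacing occurrences of the factor σ₁σ₂σ₁ with σ₂σ₁σ₂ and vice versa). -/
/-- The single braid relation of `B₃`: `σ₁σ₂σ₁ = σ₂σ₁σ₂`. -/
def braidRel : Set (FreeGroup (Fin 2)) :=
  {FreeGroup.of 0 * FreeGroup.of 1 * FreeGroup.of 0 *
    (FreeGroup.of 1 * FreeGroup.of 0 * FreeGroup.of 1)⁻¹}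

/-- The braid group `B₃ = ⟨σ₁, σ₂ ∣ σ₁σ₂σ₁ = σ₂σ₁σ₂⟩`. -/
abbrev B3 : Type := PresentedGroup braidRel

/-- The Artin generators `σ₁ = σ 0`, `σ₂ = σ 1` of `B₃`. -/
def σ (i : Fin 2) : B3 := PresentedGroup.of i

/-- The Garside element `Δ = σ₁σ₂σ₁` of `B₃`. -/
def Δ : B3 := σ 0 * σ 1 * σ 0

/-- The image in `B₃` of a positive braid word (a word over `{σ₁, σ₂}`). -/
def posBraid (w : List (Fin 2)) : B3 := (w.map σ).prod

/-- One rewriting step using the braid relation: replace a factor `σ₁σ₂σ₁`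
by `σ₂σ₁σ₂` or vice versa. -/
def braidStep (w w' : List (Fin 2)) : Prop :=
  ∃ u v : List (Fin 2),
    (w = u ++ [0, 1, 0] ++ v ∧ w' = u ++ [1, 0, 1] ++ v) ∨
    (w = u ++ [1, 0, 1] ++ v ∧ w' = u ++ [0, 1, 0] ++ v)

namespace BraidAux

abbrev W := List (Fin 2)

def Eqv : W → W → Prop := Relation.ReflTransGen braidStep

lemma braidStep_symm {w w' : W} (h : braidStep w w') : braidStep w' w := by
  obtain ⟨u, v, h | h⟩ := h
  · exact ⟨u, v, Or.inr ⟨h.2, h.1⟩⟩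
  · exact ⟨u, v, Or.inl ⟨h.2, h.1⟩⟩

lemma Eqv.rfl {w : W} : Eqv w w := Relation.ReflTransGen.refl

lemma Eqv.symm {w w' : W} (h : Eqv w w') : Eqv w' w :=
  (@Relation.ReflTransGen.stdSymm _ _ ⟨fun _ _ h => braidStep_symm h⟩).symm _ _ h

lemma Eqv.trans {a b c : W} (h : Eqv a b) (h' : Eqv b c) : Eqv a c :=
  Relation.ReflTransGen.trans h h'

lemma Eqv.step {w w' : W} (h : braidStep w w') : Eqv w w' :=
  Relation.ReflTransGen.single h

lemma braidStep_append_left (a : W) {w w' : W} (h : braidStep w w') :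
    braidStep (a ++ w) (a ++ w') := by
  obtain ⟨u, v, h | h⟩ := h
  · exact ⟨a ++ u, v, Or.inl ⟨by simp [h.1], by simp [h.2]⟩⟩
  · exact ⟨a ++ u, v, Or.inr ⟨by simp [h.1], by simp [h.2]⟩⟩

lemma braidStep_append_right (a : W) {w w' : W} (h : braidStep w w') :
    braidStep (w ++ a) (w' ++ a) := by
  obtain ⟨u, v, h | h⟩ := h
  · exact ⟨u, v ++ a, Or.inl ⟨by simp [h.1], by simp [h.2]⟩⟩
  · exact ⟨u, v ++ a, Or.inr ⟨by simp [h.1], by simp [h.2]⟩⟩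

lemma Eqv.append_left (a : W) {w w' : W} (h : Eqv w w') : Eqv (a ++ w) (a ++ w') :=
  Relation.ReflTransGen.lift (a ++ ·) (fun _ _ h => braidStep_append_left a h) _ _ h

lemma Eqv.append_right (a : W) {w w' : W} (h : Eqv w w') : Eqv (w ++ a) (w' ++ a) :=
  Relation.ReflTransGen.lift (· ++ a) (fun _ _ h => braidStep_append_right a h) _ _ h

lemma Eqv.append {u u' v v' : W} (h : Eqv u u') (h' : Eqv v v') :
    Eqv (u ++ v) (u' ++ v') :=
  (Eqv.append_right v h).trans (Eqv.append_left u' h')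

lemma Eqv.cons (a : Fin 2) {w w' : W} (h : Eqv w w') : Eqv (a :: w) (a :: w') :=
  Eqv.append_left [a] h

lemma braidStep_length {w w' : W} (h : braidStep w w') : w'.length = w.length := by
  obtain ⟨u, v, h | h⟩ := h <;> simp [h.1, h.2]

lemma fin2_eq_of_ne {a b c : Fin 2} (h1 : a ≠ c) (h2 : b ≠ c) : a = b := by
  fin_cases a <;> fin_cases b <;> fin_cases c <;> simp_all

lemma braidStep_iff {w w' : W} : braidStep w w' ↔
    ∃ (p q : Fin 2) (u v : W), p ≠ q ∧ w = u ++ [p, q, p] ++ v ∧ w' = u ++ [q, p, q] ++ v := by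
  constructor
  · rintro ⟨u, v, ⟨h1, h2⟩ | ⟨h1, h2⟩⟩
    · exact ⟨0, 1, u, v, by decide, h1, h2⟩
    · exact ⟨1, 0, u, v, by decide, h1, h2⟩
  · rintro ⟨p, q, u, v, hpq, h1, h2⟩
    have : (p = 0 ∧ q = 1) ∨ (p = 1 ∧ q = 0) := by
      fin_cases p <;> fin_cases q <;> simp_all
    rcases this with ⟨rfl, rfl⟩ | ⟨rfl, rfl⟩
    · exact ⟨u, v, Or.inl ⟨h1, h2⟩⟩
    · exact ⟨u, v, Or.inr ⟨h1, h2⟩⟩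

lemma braidStep_cons {x : Fin 2} {u z : W} (h : braidStep (x :: u) z) :
    (∃ u1, z = x :: u1 ∧ braidStep u u1) ∨
    (∃ (p q : Fin 2) (v0 : W), p ≠ q ∧ x = p ∧ u = q :: p :: v0 ∧ z = q :: p :: q :: v0) := by
  rw [braidStep_iff] at h
  obtain ⟨p, q, a, v, hpq, h1, h2⟩ := h
  cases a with
  | nil =>
    simp only [List.nil_append] at h1 h2
    refine Or.inr ⟨p, q, v, hpq, ?_, ?_, ?_⟩ <;>
      simp_all [List.cons.injEq]
  | cons h0 t =>
    simp only [List.cons_append, List.cons.injEq] at h1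
    refine Or.inl ⟨t ++ [q, p, q] ++ v, by rw [h2, h1.1]; simp, ?_⟩
    rw [h1.2]
    exact braidStep_iff.2 ⟨p, q, t, v, hpq, rfl, rfl⟩

inductive Steps : ℕ → W → W → Prop
  | refl (w : W) : Steps 0 w w
  | head {w z w' : W} {n : ℕ} : braidStep w z → Steps n z w' → Steps (n + 1) w w'

lemma Steps.eqv {n : ℕ} {w w' : W} (h : Steps n w w') : Eqv w w' := by
  induction h with
  | refl => exact Eqv.rfl
  | head h _ ih => exact (Eqv.step h).trans ih

lemma eqv_iff_steps {w w' : W} : Eqv w w' ↔ ∃ n, Steps n w w' := by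
  constructor
  · intro h
    induction h using Relation.ReflTransGen.head_induction_on with
    | refl => exact ⟨0, Steps.refl _⟩
    | head h _ ih => obtain ⟨n, hn⟩ := ih; exact ⟨n + 1, Steps.head h hn⟩
  · rintro ⟨n, h⟩; exact h.eqv

end BraidAux

namespace BraidAux

lemma key : ∀ L n (x : Fin 2) (u : W) (y : Fin 2) (v : W),
    u.length = L → Steps n (x :: u) (y :: v) →
    (x = y → Eqv u v) ∧ (x ≠ y → ∃ w, Eqv u (y :: x :: w) ∧ Eqv v (x :: y :: w)) := by
  intro L
  induction L using Nat.strong_induction_on with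
  | _ L IHL =>
  intro n
  induction n using Nat.strong_induction_on with
  | _ n IHn =>
  intro x u y v hL hsteps
  cases hsteps with
  | refl =>
    exact ⟨fun _ => Eqv.rfl, fun h => absurd rfl h⟩
  | @head _ z _ n' hstep rest =>
    rcases braidStep_cons hstep with ⟨u1, rfl, hstep'⟩ | ⟨p, q, v0, hpq, rfl, rfl, hz⟩
    · have hlen : u1.length = L := (braidStep_length hstep').trans hL
      have IH := IHn n' (by omega) x u1 y v hlen rest
      refine ⟨fun hxy => (Eqv.step hstep').trans (IH.1 hxy), fun hxy => ?_⟩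
      obtain ⟨w, h1, h2⟩ := IH.2 hxy
      exact ⟨w, (Eqv.step hstep').trans h1, h2⟩
    · subst hz
      have hL' : (x :: q :: v0).length = L := by
        simp only [List.length_cons] at hL ⊢; omega
      have IH := IHn n' (by omega) q (x :: q :: v0) y v hL' rest
      by_cases hqy : q = y
      · subst hqy
        have hv : Eqv (x :: q :: v0) v := IH.1 rfl
        exact ⟨fun hxy => absurd hxy hpq, fun _ => ⟨v0, Eqv.rfl, hv.symm⟩⟩
      · have hyp : y = x := fin2_eq_of_ne (fun h => hqy h.symm) hpq
        subst hyp
        obtain ⟨w, hw1, hw2⟩ := IH.2 hqy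
        obtain ⟨m, hm⟩ := eqv_iff_steps.1 hw1
        have hlt1 : (q :: v0).length < L := by
          simp only [List.length_cons] at hL ⊢; omega
        have h1 : Eqv (q :: v0) (q :: w) :=
          (IHL _ hlt1 m y (q :: v0) y (q :: w) rfl hm).1 rfl
        obtain ⟨m2, hm2⟩ := eqv_iff_steps.1 h1
        have hlt2 : v0.length < L := by
          simp only [List.length_cons] at hL; omega
        have h2 : Eqv v0 w :=
          (IHL _ hlt2 m2 q v0 q w rfl hm2).1 rfl
        have huv : Eqv (q :: y :: v0) v := ((h2.cons y).cons q).trans hw2.symm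
        exact ⟨fun _ => huv, fun hxy => absurd rfl hxy⟩

end BraidAux

namespace BraidAux

lemma cancel_cons {a : Fin 2} {u v : W} (h : Eqv (a :: u) (a :: v)) : Eqv u v := by
  obtain ⟨n, hn⟩ := eqv_iff_steps.1 h
  exact (key u.length n a u a v rfl hn).1 rfl

lemma cancel_left {m u v : W} (h : Eqv (m ++ u) (m ++ v)) : Eqv u v := by
  induction m with
  | nil => simpa using h
  | cons a t ih => exact ih (cancel_cons (by simpa using h))

lemma braidStep_reverse {w w' : W} (h : braidStep w w') :
    braidStep w.reverse w'.reverse := by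
  obtain ⟨u, v, ⟨h1, h2⟩ | ⟨h1, h2⟩⟩ := h
  · exact ⟨v.reverse, u.reverse, Or.inl ⟨by simp [h1], by simp [h2]⟩⟩
  · exact ⟨v.reverse, u.reverse, Or.inr ⟨by simp [h1], by simp [h2]⟩⟩

lemma Eqv.reverse {w w' : W} (h : Eqv w w') : Eqv w.reverse w'.reverse :=
  Relation.ReflTransGen.lift List.reverse (fun _ _ h => braidStep_reverse h) _ _ h

lemma cancel_right {m u v : W} (h : Eqv (u ++ m) (v ++ m)) : Eqv u v := by
  have := h.reverse
  simp only [List.reverse_append] at this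
  have := cancel_left this
  simpa using this.reverse

/-- the central element `Δ²` as a word -/
def C : W := [0, 1, 0, 0, 1, 0]

def τ : Fin 2 → Fin 2 := fun x => 1 - x

def ΔW : W := [0, 1, 0]

lemma delta_swap (x : Fin 2) : Eqv (ΔW ++ [x]) ([τ x] ++ ΔW) := by
  fin_cases x
  · exact (Eqv.step ⟨[], [0], Or.inr ⟨rfl, rfl⟩⟩).symm
  · show Eqv (ΔW ++ [1]) ([τ 1] ++ ΔW)
    exact Eqv.step ⟨[0], [], Or.inr ⟨rfl, rfl⟩⟩

lemma delta_comm (w : W) : Eqv (ΔW ++ w) (w.map τ ++ ΔW) := by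
  induction w with
  | nil => exact Eqv.rfl
  | cons a t ih =>
    have h1 : Eqv (ΔW ++ (a :: t)) (([τ a] ++ ΔW) ++ t) := by
      have := (delta_swap a).append_right t
      simpa using this
    have h2 : Eqv (([τ a] ++ ΔW) ++ t) ([τ a] ++ (t.map τ ++ ΔW)) := by
      have := ih.append_left [τ a]
      simpa using this
    simpa using h1.trans h2

lemma tau_tau (x : Fin 2) : τ (τ x) = x := by fin_cases x <;> rfl

lemma C_comm (w : W) : Eqv (C ++ w) (w ++ C) := by
  have h1 : Eqv (ΔW ++ (ΔW ++ w)) (ΔW ++ (w.map τ ++ ΔW)) :=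
    (delta_comm w).append_left ΔW
  have h2 : Eqv ((ΔW ++ w.map τ) ++ ΔW) (((w.map τ).map τ ++ ΔW) ++ ΔW) :=
    (delta_comm (w.map τ)).append_right ΔW
  have h3 : ((w.map τ).map τ) = w := by
    have ht : τ ∘ τ = id := funext tau_tau
    rw [List.map_map, ht, List.map_id]
  rw [h3] at h2
  have : Eqv (C ++ w) ((w ++ ΔW) ++ ΔW) := by
    have := h1.trans (by simpa [List.append_assoc] using h2)
    simpa [C, ΔW, List.append_assoc] using this
  simpa [C, ΔW, List.append_assoc] using this

def Cp : ℕ → W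
  | 0 => []
  | k + 1 => C ++ Cp k

lemma Cp_comm (k : ℕ) (w : W) : Eqv (Cp k ++ w) (w ++ Cp k) := by
  induction k with
  | zero => simp [Cp]; exact Eqv.rfl
  | succ k ih =>
    have h1 : Eqv (C ++ (Cp k ++ w)) (C ++ (w ++ Cp k)) := ih.append_left C
    have h2 : Eqv ((C ++ w) ++ Cp k) ((w ++ C) ++ Cp k) := (C_comm w).append_right _
    have h : Eqv (C ++ (Cp k ++ w)) (w ++ C ++ Cp k) :=
      h1.trans (by simpa [List.append_assoc] using h2)
    simpa [Cp, List.append_assoc] using h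

lemma Cp_add (a b : ℕ) : Cp (a + b) = Cp a ++ Cp b := by
  induction a with
  | zero => simp [Cp]
  | succ a ih =>
    rw [show a + 1 + b = (a + b) + 1 by omega]
    simp [Cp, ih, List.append_assoc]

def lbar : Fin 2 → W := fun x => if x = 0 then [1, 0, 0, 1, 0] else [0, 1, 0, 1, 0]

lemma lbar_spec (x : Fin 2) : Eqv (x :: lbar x) C := by
  fin_cases x
  · exact Eqv.rfl
  · exact Eqv.step ⟨[], [0, 1, 0], Or.inr ⟨rfl, rfl⟩⟩

def compl : W → W
  | [] => []
  | x :: m => compl m ++ lbar x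

lemma compl_spec : ∀ m : W, Eqv (m ++ compl m) (Cp m.length)
  | [] => Eqv.rfl
  | x :: m => by
    have h1 : Eqv ((x :: (m ++ compl m)) ++ lbar x) ((x :: Cp m.length) ++ lbar x) :=
      ((compl_spec m).cons x).append_right _
    have h2 : Eqv (([x] ++ Cp m.length) ++ lbar x) ((Cp m.length ++ [x]) ++ lbar x) :=
      ((Cp_comm m.length [x]).symm).append_right _
    have h3 : Eqv (Cp m.length ++ ([x] ++ lbar x)) (Cp m.length ++ C) :=
      (lbar_spec x).append_left _
    have h4 : Eqv (Cp m.length ++ C) (C ++ Cp m.length) := (C_comm (Cp m.length)).symm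
    have : Eqv ((x :: m) ++ compl (x :: m)) (C ++ Cp m.length) := by
      refine (?_ : Eqv _ _).trans h4
      refine (?_ : Eqv _ _).trans h3
      refine (?_ : Eqv _ _).trans (by simpa [List.append_assoc] using h2)
      simpa [compl, List.append_assoc] using h1
    simpa [Cp, List.length_cons] using this

end BraidAux

namespace BraidAux

lemma Cp_swap (i j : ℕ) : Cp i ++ Cp j = Cp j ++ Cp i := by
  rw [← Cp_add, ← Cp_add, Nat.add_comm]

lemma swap_mid (a b : W) (k : ℕ) (c : W) :
    Eqv (a ++ (Cp k ++ (b ++ c))) (a ++ (b ++ (Cp k ++ c))) := by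
  have := ((Cp_comm k b).append_right c).append_left a
  simpa [List.append_assoc] using this

def rel : W × ℕ → W × ℕ → Prop := fun A B => Eqv (A.1 ++ Cp B.2) (B.1 ++ Cp A.2)

lemma rel_trans {a b c : W × ℕ} (h1 : rel a b) (h2 : rel b c) : rel a c := by
  obtain ⟨a1, a2⟩ := a; obtain ⟨b1, b2⟩ := b; obtain ⟨c1, c2⟩ := c
  simp only [rel] at *
  refine cancel_right (m := Cp b2) ?_
  have e1 : (a1 ++ Cp c2) ++ Cp b2 = (a1 ++ Cp b2) ++ Cp c2 := by
    rw [List.append_assoc, List.append_assoc, Cp_swap c2 b2]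
  have e2 : (c1 ++ Cp a2) ++ Cp b2 = (c1 ++ Cp b2) ++ Cp a2 := by
    rw [List.append_assoc, List.append_assoc, Cp_swap a2 b2]
  have e3 : (b1 ++ Cp a2) ++ Cp c2 = (b1 ++ Cp c2) ++ Cp a2 := by
    rw [List.append_assoc, List.append_assoc, Cp_swap a2 c2]
  rw [e1, e2]
  exact (h1.append_right _).trans (e3 ▸ (h2.append_right (Cp a2)))

instance braidSetoid : Setoid (W × ℕ) :=
  ⟨rel, ⟨fun _ => Eqv.rfl, fun h => h.symm, rel_trans⟩⟩

abbrev G := Quotient braidSetoid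

instance : Mul G :=
  ⟨Quotient.map₂ (fun A B => (A.1 ++ B.1, A.2 + B.2)) (by
    rintro ⟨a1, a2⟩ ⟨a1', a2'⟩ ha ⟨b1, b2⟩ ⟨b1', b2'⟩ hb
    simp only [braidSetoid, rel, Setoid.r] at *
    have step1 : Eqv (a1 ++ (b1 ++ (Cp a2' ++ Cp b2'))) (a1 ++ (Cp a2' ++ (b1 ++ Cp b2'))) :=
      (swap_mid a1 b1 a2' (Cp b2')).symm
    have step2 : Eqv (a1 ++ (Cp a2' ++ (b1 ++ Cp b2'))) (a1' ++ (Cp a2 ++ (b1' ++ Cp b2))) := by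
      have := ha.append hb
      simpa [List.append_assoc] using this
    have step3 := swap_mid a1' b1' a2 (Cp b2)
    have := step1.trans (step2.trans step3)
    show rel (a1 ++ b1, a2 + b2) (a1' ++ b1', a2' + b2')
    simp only [rel]
    simpa [Cp_add, List.append_assoc] using this)⟩

instance : One G := ⟨Quotient.mk braidSetoid ([], 0)⟩

lemma mul_mk (a b : W × ℕ) :
    (Quotient.mk braidSetoid a * Quotient.mk braidSetoid b) =
      Quotient.mk braidSetoid (a.1 ++ b.1, a.2 + b.2) := rfl

instance : Monoid G where
  mul_assoc a b c := by
    induction a using Quotient.inductionOn with | _ a =>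
    induction b using Quotient.inductionOn with | _ b =>
    induction c using Quotient.inductionOn with | _ c =>
    simp only [mul_mk, List.append_assoc, Nat.add_assoc]
  one_mul a := by
    induction a using Quotient.inductionOn with | _ a =>
    obtain ⟨m, k⟩ := a
    show (Quotient.mk braidSetoid ([], 0) * Quotient.mk braidSetoid (m, k)) = _
    rw [mul_mk]
    simp
  mul_one a := by
    induction a using Quotient.inductionOn with | _ a =>
    obtain ⟨m, k⟩ := a
    show (Quotient.mk braidSetoid (m, k) * Quotient.mk braidSetoid ([], 0)) = _
    rw [mul_mk]
    simp

lemma exists_rinv (g : G) : ∃ h, g * h = 1 := by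
  induction g using Quotient.inductionOn with | _ a =>
  obtain ⟨m, k⟩ := a
  refine ⟨Quotient.mk braidSetoid (Cp k ++ compl m, m.length), ?_⟩
  rw [mul_mk]
  refine Quotient.sound ?_
  show Eqv ((m ++ (Cp k ++ compl m)) ++ Cp 0) ([] ++ Cp (k + m.length))
  have h1 : Eqv (m ++ (Cp k ++ compl m)) (m ++ (compl m ++ Cp k)) :=
    (Cp_comm k (compl m)).append_left m
  have h2 : Eqv ((m ++ compl m) ++ Cp k) (Cp m.length ++ Cp k) :=
    (compl_spec m).append_right _
  have : Eqv (m ++ (Cp k ++ compl m)) (Cp (k + m.length)) := by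
    refine h1.trans ?_
    rw [show k + m.length = m.length + k by omega, Cp_add]
    simpa [List.append_assoc] using h2
  simpa [Cp] using this

lemma exists_linv (g : G) : ∃ h, h * g = 1 := by
  obtain ⟨h, hh⟩ := exists_rinv g
  obtain ⟨k, hk⟩ := exists_rinv h
  refine ⟨h, ?_⟩
  calc h * g = h * g * (h * k) := by rw [hk, mul_one]
    _ = h * (g * h) * k := by rw [mul_assoc, mul_assoc, mul_assoc]
    _ = h * k := by rw [hh, mul_one]
    _ = 1 := hk

noncomputable instance : Group G :=
  { (inferInstance : Monoid G) with
    inv := fun g => Classical.choose (exists_linv g)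
    inv_mul_cancel := fun g => Classical.choose_spec (exists_linv g) }

def gen : Fin 2 → G := fun i => Quotient.mk braidSetoid ([i], 0)

lemma gen_rel : ∀ r ∈ braidRel, FreeGroup.lift gen r = 1 := by
  intro r hr
  simp only [braidRel, Set.mem_singleton_iff] at hr
  subst hr
  simp only [map_mul, map_inv, FreeGroup.lift_apply_of]
  rw [mul_inv_eq_one]
  show gen 0 * gen 1 * gen 0 = gen 1 * gen 0 * gen 1
  simp only [gen, mul_mk]
  refine Quotient.sound ?_
  show Eqv (([0, 1, 0] : W) ++ Cp 0) (([1, 0, 1] : W) ++ Cp 0)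
  exact Eqv.step ⟨[], [], Or.inl ⟨by simp [Cp], by simp [Cp]⟩⟩

noncomputable def φ : B3 →* G := PresentedGroup.toGroup gen_rel

lemma φ_pos (w : W) : φ (posBraid w) = Quotient.mk braidSetoid (w, 0) := by
  induction w with
  | nil =>
    show φ 1 = _
    rw [map_one]
    rfl
  | cons x t ih =>
    have : posBraid (x :: t) = σ x * posBraid t := by simp [posBraid]
    rw [this, map_mul]
    have hσ : φ (σ x) = gen x := PresentedGroup.toGroup.of gen_rel
    rw [hσ, ih]
    simp only [gen, mul_mk]
    rfl

lemma braid_relation : σ 0 * σ 1 * σ 0 = σ 1 * σ 0 * σ 1 := by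
  have hmem : (FreeGroup.of 0 * FreeGroup.of 1 * FreeGroup.of 0 *
      (FreeGroup.of 1 * FreeGroup.of 0 * FreeGroup.of 1)⁻¹ : FreeGroup (Fin 2)) ∈
      Subgroup.normalClosure braidRel :=
    Subgroup.subset_normalClosure (by simp [braidRel])
  have h : PresentedGroup.mk braidRel (FreeGroup.of 0 * FreeGroup.of 1 * FreeGroup.of 0 *
      (FreeGroup.of 1 * FreeGroup.of 0 * FreeGroup.of 1)⁻¹) = 1 :=
    (QuotientGroup.eq_one_iff _).2 hmem
  rw [map_mul, map_mul, map_inv, map_mul, map_mul] at h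
  change (σ 0 * σ 1 * σ 0) * (σ 1 * σ 0 * σ 1)⁻¹ = 1 at h
  exact mul_inv_eq_one.1 h

lemma posBraid_append (a b : W) : posBraid (a ++ b) = posBraid a * posBraid b := by
  simp [posBraid]

lemma posBraid_step {a b : W} (h : braidStep a b) : posBraid a = posBraid b := by
  have h010 : posBraid [0, 1, 0] = posBraid [1, 0, 1] := by
    simpa [posBraid, mul_assoc] using braid_relation
  obtain ⟨u, v, ⟨h1, h2⟩ | ⟨h1, h2⟩⟩ := h <;>
    rw [h1, h2] <;> simp only [posBraid_append] <;> rw [h010]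

end BraidAux

/-- Two positive braid words are equal in `B₃` iff one can be obtained from the
other by successively applying the relation `σ₁σ₂σ₁ = σ₂σ₁σ₂`. -/
theorem positive_words_eq_iff (w w' : List (Fin 2)) :
    posBraid w = posBraid w' ↔ Relation.ReflTransGen braidStep w w' := by
  constructor
  · intro h
    have h2 := congrArg BraidAux.φ h
    rw [BraidAux.φ_pos, BraidAux.φ_pos] at h2
    have h3 := Quotient.exact h2
    have h4 : BraidAux.Eqv (w ++ BraidAux.Cp 0) (w' ++ BraidAux.Cp 0) := h3
    simpa [BraidAux.Cp, BraidAux.Eqv] using h4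
  · intro h
    induction h with
    | refl => rfl
    | tail _ hstep ih => exact ih.trans (BraidAux.posBraid_step hstep)
end

section
/- Every element of B_3 can be written uniquely as Δᵏ·β where k ∈ ℤ and β is (the image of) a positive braid word of which Δ is not a left divisor. -/
lemma braid : σ 0 * σ 1 * σ 0 = σ 1 * σ 0 * σ 1 := by
  have h : (PresentedGroup.mk braidRel) (FreeGroup.of 0 * FreeGroup.of 1 * FreeGroup.of 0 *
      (FreeGroup.of 1 * FreeGroup.of 0 * FreeGroup.of 1)⁻¹) = 1 := by
    apply (QuotientGroup.eq_one_iff _).mpr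
    exact Subgroup.subset_normalClosure rfl
  simp only [map_mul, map_inv] at h
  have := mul_inv_eq_one.mp h
  exact this

lemma Δ_alt : Δ = σ 1 * σ 0 * σ 1 := braid

def bflip (i : Fin 2) : Fin 2 := if i = 0 then 1 else 0

lemma bflip_flip (i : Fin 2) : bflip (bflip i) = i := by fin_cases i <;> rfl

@[simp] lemma posBraid_nil : posBraid [] = 1 := rfl

lemma posBraid_cons (i : Fin 2) (w : List (Fin 2)) :
    posBraid (i :: w) = σ i * posBraid w := by simp [posBraid]

lemma posBraid_append (v w : List (Fin 2)) :
    posBraid (v ++ w) = posBraid v * posBraid w := by simp [posBraid]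

lemma Δ_mul_σ (i : Fin 2) : Δ * σ i = σ (bflip i) * Δ := by
  have h0 : Δ * σ 0 = σ 1 * Δ := by
    conv_lhs => rw [Δ_alt]
    rw [Δ]; group
  have h1 : Δ * σ 1 = σ 0 * Δ := by
    conv_rhs => rw [Δ_alt]
    rw [Δ]; group
  fin_cases i
  · exact h0
  · exact h1

lemma Δ_mul_pos (w : List (Fin 2)) :
    Δ * posBraid w = posBraid (w.map bflip) * Δ := by
  induction w with
  | nil => simp
  | cons i w ih =>
    rw [posBraid_cons, List.map_cons, posBraid_cons, ← mul_assoc, Δ_mul_σ,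
      mul_assoc, ih, mul_assoc]

lemma pos_mul_Δinv (w : List (Fin 2)) :
    posBraid w * Δ⁻¹ = Δ⁻¹ * posBraid (w.map bflip) := by
  have h2 : posBraid (w.map bflip) = Δ * posBraid w * Δ⁻¹ := by
    rw [eq_mul_inv_iff_mul_eq]; exact (Δ_mul_pos w).symm
  rw [h2]; group

lemma map_bflip_bflip (w : List (Fin 2)) : (w.map bflip).map bflip = w := by
  rw [List.map_map, show bflip ∘ bflip = id from funext bflip_flip, List.map_id]

lemma pos_mul_Δ (w : List (Fin 2)) :
    posBraid w * Δ = Δ * posBraid (w.map bflip) := by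
  have h := Δ_mul_pos (w.map bflip)
  rwa [map_bflip_bflip, eq_comm] at h

lemma pos_comm_zpow (j : ℤ) (w : List (Fin 2)) :
    ∃ v, posBraid w * Δ ^ j = Δ ^ j * posBraid v := by
  induction j using Int.induction_on generalizing w with
  | zero => exact ⟨w, by simp⟩
  | succ n ih =>
    obtain ⟨v, hv⟩ := ih w
    refine ⟨v.map bflip, ?_⟩
    rw [zpow_add, zpow_one, ← mul_assoc, hv, mul_assoc, pos_mul_Δ, ← mul_assoc]
  | pred n ih =>
    obtain ⟨v, hv⟩ := ih w
    refine ⟨v.map bflip, ?_⟩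
    rw [sub_eq_add_neg, zpow_add, zpow_neg_one, ← mul_assoc, hv, mul_assoc,
      pos_mul_Δinv, ← mul_assoc]

def invw (i : Fin 2) : List (Fin 2) := if i = 0 then [0, 1] else [1, 0]

lemma σ_inv (i : Fin 2) : (σ i)⁻¹ = Δ⁻¹ * posBraid (invw i) := by
  fin_cases i
  · show (σ 0)⁻¹ = Δ⁻¹ * posBraid [0, 1]
    rw [eq_inv_mul_iff_mul_eq, mul_inv_eq_iff_eq_mul]
    show Δ = posBraid [0,1] * σ 0
    rw [Δ]; simp [posBraid, mul_assoc]
  · show (σ 1)⁻¹ = Δ⁻¹ * posBraid [1, 0]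
    rw [eq_inv_mul_iff_mul_eq, mul_inv_eq_iff_eq_mul]
    show Δ = posBraid [1,0] * σ 1
    rw [Δ_alt]; simp [posBraid, mul_assoc]

lemma pos_inv (w : List (Fin 2)) :
    ∃ (m : ℤ) (v : List (Fin 2)), (posBraid w)⁻¹ = Δ ^ m * posBraid v := by
  induction w with
  | nil => exact ⟨0, [], by simp⟩
  | cons i w ih =>
    obtain ⟨m, v, hv⟩ := ih
    obtain ⟨u, hu⟩ := pos_comm_zpow (-1) v
    refine ⟨m + -1, u ++ invw i, ?_⟩
    rw [posBraid_cons, mul_inv_rev, hv, σ_inv, posBraid_append, zpow_add,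
      ← zpow_neg_one Δ, mul_assoc, ← mul_assoc (posBraid v), hu]
    group

lemma exists_rep (g : B3) : ∃ (k : ℤ) (w : List (Fin 2)), g = Δ ^ k * posBraid w := by
  have htop : g ∈ Subgroup.closure (Set.range (σ : Fin 2 → B3)) := by
    have := PresentedGroup.closure_range_of braidRel
    rw [show (Set.range (σ : Fin 2 → B3)) = Set.range (PresentedGroup.of) from rfl, this]
    trivial
  induction htop using Subgroup.closure_induction with
  | mem x hx =>
    obtain ⟨i, rfl⟩ := hx
    exact ⟨0, [i], by simp [posBraid]⟩
  | one => exact ⟨0, [], by simp⟩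
  | mul x y _ _ hx hy =>
    obtain ⟨k, w, rfl⟩ := hx
    obtain ⟨j, v, rfl⟩ := hy
    obtain ⟨u, hu⟩ := pos_comm_zpow j w
    refine ⟨k + j, u ++ v, ?_⟩
    rw [posBraid_append, zpow_add]
    calc Δ ^ k * posBraid w * (Δ ^ j * posBraid v)
        = Δ ^ k * (posBraid w * Δ ^ j) * posBraid v := by group
      _ = Δ ^ k * (Δ ^ j * posBraid u) * posBraid v := by rw [hu]
      _ = Δ ^ k * Δ ^ j * (posBraid u * posBraid v) := by group
  | inv x _ hx =>
    obtain ⟨k, w, rfl⟩ := hx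
    obtain ⟨m, v, hv⟩ := pos_inv w
    obtain ⟨u, hu⟩ := pos_comm_zpow (-k) v
    refine ⟨m + -k, u, ?_⟩
    rw [mul_inv_rev, hv, zpow_add]
    rw [mul_assoc (Δ ^ m), ← zpow_neg Δ k, hu]
    group

lemma Δ_eq_pos : Δ = posBraid [0, 1, 0] := by simp [posBraid, Δ, mul_assoc]

def blen : B3 →* Multiplicative ℤ :=
  PresentedGroup.toGroup (f := fun _ => Multiplicative.ofAdd (1 : ℤ)) (by
    rintro r hr
    rw [Set.mem_singleton_iff.mp hr]
    simp only [map_mul, map_inv, FreeGroup.lift_apply_of]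
    group)

lemma blen_σ (i : Fin 2) : blen (σ i) = Multiplicative.ofAdd (1 : ℤ) := by
  simp [σ, blen, PresentedGroup.toGroup.of]

lemma blen_pos (w : List (Fin 2)) :
    blen (posBraid w) = Multiplicative.ofAdd (w.length : ℤ) := by
  induction w with
  | nil => simp
  | cons i w ih =>
    rw [posBraid_cons, map_mul, blen_σ, ih]
    simp [← ofAdd_add]
    ring

lemma len_of_div {w w' : List (Fin 2)} (h : posBraid w = Δ * posBraid w') :
    (w.length : ℤ) = 3 + w'.length := by
  have := congrArg blen h
  rw [Δ_eq_pos, ← posBraid_append, blen_pos, blen_pos] at this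
  have h2 := Multiplicative.ofAdd.injective this
  simp only [List.length_append, List.length_cons, List.length_nil] at h2
  omega

lemma Δ_pow_pos (m : ℕ) (w : List (Fin 2)) :
    ∃ v, Δ ^ m * posBraid w = posBraid v := by
  induction m with
  | zero => exact ⟨w, by simp⟩
  | succ n ih =>
    obtain ⟨v, hv⟩ := ih
    exact ⟨[0, 1, 0] ++ v, by
      rw [pow_succ', mul_assoc, hv, posBraid_append, ← Δ_eq_pos]⟩

lemma div_of_shift {k j : ℤ} {γ : B3} (w : List (Fin 2)) (hk : j < k)
    (h : Δ ^ k * posBraid w = Δ ^ j * γ) : ∃ w', γ = Δ * posBraid w' := by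
  have hγ : γ = Δ ^ (k - j) * posBraid w := by
    rw [sub_eq_add_neg, add_comm, zpow_add, mul_assoc, h]
    group
  obtain ⟨v, hv⟩ := Δ_pow_pos (k - j - 1).toNat w
  refine ⟨v, ?_⟩
  rw [hγ, show k - j = 1 + (k - j - 1) by ring, zpow_add, zpow_one, mul_assoc, ← hv,
    show Δ ^ (k - j - 1) = Δ ^ ((k - j - 1).toNat : ℤ) by rw [Int.toNat_of_nonneg (by omega)],
    zpow_natCast]

lemma exists_nf : ∀ (n : ℕ) (w : List (Fin 2)), w.length = n → ∀ (k : ℤ),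
    ∃ p : ℤ × B3, Δ ^ k * posBraid w = Δ ^ p.1 * p.2 ∧
      (∃ w0 : List (Fin 2), p.2 = posBraid w0) ∧
      ¬∃ w' : List (Fin 2), p.2 = Δ * posBraid w' := by
  intro n
  induction n using Nat.strong_induction_on with
  | _ n ih =>
    intro w hw k
    by_cases h : ∃ w' : List (Fin 2), posBraid w = Δ * posBraid w'
    · obtain ⟨w', hw'⟩ := h
      have hlen : w'.length < n := by have := len_of_div hw'; omega
      obtain ⟨p, hp1, hp2, hp3⟩ := ih w'.length hlen w' rfl (k + 1)
      refine ⟨p, ?_, hp2, hp3⟩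
      rw [← hp1, hw', zpow_add, zpow_one, mul_assoc]
    · exact ⟨(k, posBraid w), rfl, ⟨w, rfl⟩, h⟩


/-- Garside normal form: every element of `B₃` can be written uniquely as
`Δᵏ · β` with `k ∈ ℤ` and `β` a positive braid of which `Δ` is not a left
divisor (in the positive sense). -/
theorem garside_normal_form (g : B3) :
    ∃! p : ℤ × B3,
      g = Δ ^ p.1 * p.2 ∧ (∃ w : List (Fin 2), p.2 = posBraid w) ∧
        ¬ ∃ w' : List (Fin 2), p.2 = Δ * posBraid w' := by
  obtain ⟨k, w, rfl⟩ := exists_rep g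
  obtain ⟨p, hp1, hp2, hp3⟩ := exists_nf w.length w rfl k
  refine ⟨p, ⟨hp1, hp2, hp3⟩, ?_⟩
  rintro ⟨j, γ⟩ ⟨h1, ⟨v, rfl⟩, h3⟩
  have key : Δ ^ j * posBraid v = Δ ^ p.1 * p.2 := by rw [← h1, hp1]
  obtain ⟨w0, hw0⟩ := hp2
  have hjp : j = p.1 := by
    rcases lt_trichotomy j p.1 with hlt | heq | hgt
    · exact absurd (div_of_shift w0 hlt (by rw [← hw0]; exact key.symm)) h3
    · exact heq
    · exact absurd (div_of_shift v hgt key) hp3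
  subst hjp
  have : posBraid v = p.2 := mul_left_cancel key
  obtain ⟨p1, p2⟩ := p
  simp_all
end

section
/- The subgroup of B_3 generated by σ₁⁴ and σ₂⁴ is a free group of rank 2; equivalently, the map f sending the free group generators c, d to σ₁⁴ and σ₂⁴ respectively is an injective group homomorphism from FG({c,d}) into B_3. -/
open Pointwise


/-! ### Auxiliary setup: a Burau-type representation `B₃ → GL(2,ℤ)` -/

open Pointwise in
abbrev M2 : Type := Matrix (Fin 2) (Fin 2) ℤ

/-- The image of `σ₁`. -/
def S1 : M2ˣ :=
  ⟨!![1,1;0,1], !![1,-1;0,1],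
   by simp [Matrix.mul_fin_two, Matrix.one_fin_two],
   by simp [Matrix.mul_fin_two, Matrix.one_fin_two]⟩

/-- The image of `σ₂`. -/
def S2 : M2ˣ :=
  ⟨!![1,0;-1,1], !![1,0;1,1],
   by simp [Matrix.mul_fin_two, Matrix.one_fin_two],
   by simp [Matrix.mul_fin_two, Matrix.one_fin_two]⟩

lemma braidS : S1 * S2 * S1 = S2 * S1 * S2 := by
  ext : 1
  show ((S1 : M2) * S2 * S1 : M2) = _
  simp [S1, S2, Matrix.mul_fin_two]

lemma S14 : ((S1 ^ 4 : M2ˣ) : M2) = !![1,4;0,1] := by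
  show ((S1 : M2) ^ 4) = _
  norm_num [S1, pow_succ, Matrix.mul_fin_two, Matrix.one_fin_two]

lemma S24 : ((S2 ^ 4 : M2ˣ) : M2) = !![1,0;-4,1] := by
  show ((S2 : M2) ^ 4) = _
  norm_num [S2, pow_succ, Matrix.mul_fin_two, Matrix.one_fin_two]

lemma S14inv : (((S1 ^ 4)⁻¹ : M2ˣ) : M2) = !![1,-4;0,1] := by
  rw [← inv_pow]
  show ((S1⁻¹ : M2ˣ) : M2) ^ 4 = _
  norm_num [S1, pow_succ, Matrix.mul_fin_two, Matrix.one_fin_two]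

lemma S24inv : (((S2 ^ 4)⁻¹ : M2ˣ) : M2) = !![1,0;4,1] := by
  rw [← inv_pow]
  show ((S2⁻¹ : M2ˣ) : M2) ^ 4 = _
  norm_num [S2, pow_succ, Matrix.mul_fin_two, Matrix.one_fin_two]

/-! ### The action of `M2ˣ` on nonzero integer vectors -/

def V : Type := {v : Fin 2 → ℤ // v ≠ 0}

instance : MulAction M2ˣ V where
  smul g v := ⟨(g : M2).mulVec v.1, by
    intro h
    apply v.2
    have h2 := congrArg (fun w => ((g⁻¹ : M2ˣ) : M2).mulVec w) h
    beta_reduce at h2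
    rw [Matrix.mulVec_mulVec, Units.inv_mul, Matrix.one_mulVec, Matrix.mulVec_zero] at h2
    exact h2⟩
  one_smul v := Subtype.ext (by simp [HSMul.hSMul, SMul.smul])
  mul_smul g h v := Subtype.ext (by
    simp [HSMul.hSMul, SMul.smul, Matrix.mulVec_mulVec, Matrix.mul_apply, Fin.sum_univ_two]
    constructor <;> ring)

lemma smul_val (g : M2ˣ) (v : V) (i : Fin 2) :
    (g • v).1 i = (g : M2) i 0 * v.1 0 + (g : M2) i 1 * v.1 1 := by
  show ((g : M2).mulVec v.1) i = _
  simp [Matrix.mulVec, dotProduct, Fin.sum_univ_two]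

lemma V_ne (v : V) : v.1 0 ≠ 0 ∨ v.1 1 ≠ 0 := by
  by_contra h
  push_neg at h
  apply v.2
  funext i
  fin_cases i
  · exact h.1
  · exact h.2

/-! ### Key arithmetic inequalities for the ping-pong argument -/

lemma L1 (x y : ℤ) (h0 : x ≠ 0 ∨ y ≠ 0) (h : |x| ≤ |y| ∨ 0 ≤ x * y) :
    |y| < |x + 4*y| ∧ 0 ≤ (x + 4*y) * y := by
  rcases h with h | h
  · have hy : 0 < |y| := by
      rcases h0 with h0 | h0
      · exact lt_of_lt_of_le (abs_pos.2 h0) h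
      · exact abs_pos.2 h0
    constructor
    · have h4 : |x + 4*y - x| ≤ |x + 4*y| + |x| := abs_sub _ _
      have h5 : x + 4*y - x = 4*y := by ring
      rw [h5, abs_mul] at h4
      rw [show |(4:ℤ)| = 4 from rfl] at h4
      omega
    · nlinarith [neg_abs_le (x*y), abs_mul x y, sq_abs y]
  · rcases mul_nonneg_iff.1 h with ⟨hx, hy⟩ | ⟨hx, hy⟩
    · rw [abs_of_nonneg hy, abs_of_nonneg (by linarith : (0:ℤ) ≤ x + 4*y)]
      constructor
      · omega
      · nlinarith
    · rw [abs_of_nonpos hy, abs_of_nonpos (by linarith : x + 4*y ≤ 0)]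
      constructor
      · omega
      · nlinarith

lemma L2 (x y : ℤ) (h0 : x ≠ 0 ∨ y ≠ 0) (h : |x| ≤ |y| ∨ x * y < 0) :
    |y| < |x - 4*y| ∧ (x - 4*y) * y < 0 := by
  rcases h with h | h
  · have hy : 0 < |y| := by
      rcases h0 with h0 | h0
      · exact lt_of_lt_of_le (abs_pos.2 h0) h
      · exact abs_pos.2 h0
    constructor
    · have h4 : |x - 4*y - x| ≤ |x - 4*y| + |x| := abs_sub _ _
      have h5 : x - 4*y - x = -(4*y) := by ring
      rw [h5, abs_neg, abs_mul] at h4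
      rw [show |(4:ℤ)| = 4 from rfl] at h4
      omega
    · nlinarith [neg_abs_le (x*y), abs_mul x y, sq_abs y, le_abs_self (x*y)]
  · rcases mul_neg_iff.1 h with ⟨hx, hy⟩ | ⟨hx, hy⟩
    · rw [abs_of_neg hy, abs_of_pos (by linarith : 0 < x - 4*y)]
      constructor
      · omega
      · nlinarith
    · rw [abs_of_pos hy, abs_of_neg (by linarith : x - 4*y < 0)]
      constructor
      · omega
      · nlinarith

/-! ### The ping-pong sets -/

def XX0 : Set V := {v | |v.1 1| < |v.1 0| ∧ 0 ≤ v.1 0 * v.1 1}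
def YY0 : Set V := {v | |v.1 1| < |v.1 0| ∧ v.1 0 * v.1 1 < 0}
def XX1 : Set V := {v | |v.1 0| < |v.1 1| ∧ v.1 0 * v.1 1 ≤ 0}
def YY1 : Set V := {v | |v.1 0| < |v.1 1| ∧ 0 < v.1 0 * v.1 1}

def XX : Fin 2 → Set V := fun i => if i = 0 then XX0 else XX1
def YY : Fin 2 → Set V := fun i => if i = 0 then YY0 else YY1

/-- The target elements of the free-group lift. -/
def aU : Fin 2 → M2ˣ := fun i => if i = 0 then S1 ^ 4 else S2 ^ 4

lemma hX0 : (S1 ^ 4) • YY0ᶜ ⊆ XX0 := by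
  rintro _ ⟨v, hv, rfl⟩
  rw [Set.mem_compl_iff, YY0, Set.mem_setOf_eq, not_and, not_lt] at hv
  have h : |v.1 0| ≤ |v.1 1| ∨ 0 ≤ v.1 0 * v.1 1 := by
    rcases le_or_gt |v.1 0| |v.1 1| with h | h
    · exact Or.inl h
    · exact Or.inr (hv h)
  have key := L1 (v.1 0) (v.1 1) (V_ne v) h
  have e0 : ((S1 ^ 4) • v).1 0 = v.1 0 + 4 * v.1 1 := by
    rw [smul_val, S14]; norm_num
  have e1 : ((S1 ^ 4) • v).1 1 = v.1 1 := by
    rw [smul_val, S14]; norm_num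
  rw [XX0, Set.mem_setOf_eq, e0, e1]
  exact ⟨key.1, by nlinarith [key.2]⟩

lemma hY0 : ((S1 ^ 4)⁻¹) • XX0ᶜ ⊆ YY0 := by
  rintro _ ⟨v, hv, rfl⟩
  rw [Set.mem_compl_iff, XX0, Set.mem_setOf_eq, not_and, not_le] at hv
  have h : |v.1 0| ≤ |v.1 1| ∨ v.1 0 * v.1 1 < 0 := by
    rcases le_or_gt |v.1 0| |v.1 1| with h | h
    · exact Or.inl h
    · exact Or.inr (hv h)
  have key := L2 (v.1 0) (v.1 1) (V_ne v) h
  have e0 : (((S1 ^ 4)⁻¹) • v).1 0 = v.1 0 - 4 * v.1 1 := by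
    rw [smul_val, S14inv]; norm_num; ring
  have e1 : (((S1 ^ 4)⁻¹) • v).1 1 = v.1 1 := by
    rw [smul_val, S14inv]; norm_num
  rw [YY0, Set.mem_setOf_eq, e0, e1]
  exact ⟨key.1, by nlinarith [key.2]⟩

lemma hX1 : (S2 ^ 4) • YY1ᶜ ⊆ XX1 := by
  rintro _ ⟨v, hv, rfl⟩
  rw [Set.mem_compl_iff, YY1, Set.mem_setOf_eq, not_and, not_lt] at hv
  have h : |v.1 1| ≤ |-(v.1 0)| ∨ 0 ≤ v.1 1 * -(v.1 0) := by
    rcases le_or_gt |v.1 1| |v.1 0| with h | h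
    · exact Or.inl (by rw [abs_neg]; exact h)
    · exact Or.inr (by nlinarith [hv h])
  have key := L1 (v.1 1) (-(v.1 0)) (Or.symm ((V_ne v).imp_left neg_ne_zero.2)) h
  rw [abs_neg] at key
  have e0 : ((S2 ^ 4) • v).1 0 = v.1 0 := by
    rw [smul_val, S24]; norm_num
  have e1 : ((S2 ^ 4) • v).1 1 = v.1 1 + 4 * -(v.1 0) := by
    rw [smul_val, S24]; norm_num; ring
  rw [XX1, Set.mem_setOf_eq, e0, e1]
  exact ⟨key.1, by nlinarith [key.2]⟩

lemma hY1 : ((S2 ^ 4)⁻¹) • XX1ᶜ ⊆ YY1 := by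
  rintro _ ⟨v, hv, rfl⟩
  rw [Set.mem_compl_iff, XX1, Set.mem_setOf_eq, not_and, not_le] at hv
  have h : |v.1 1| ≤ |-(v.1 0)| ∨ v.1 1 * -(v.1 0) < 0 := by
    rcases le_or_gt |v.1 1| |v.1 0| with h | h
    · exact Or.inl (by rw [abs_neg]; exact h)
    · exact Or.inr (by nlinarith [hv h])
  have key := L2 (v.1 1) (-(v.1 0)) (Or.symm ((V_ne v).imp_left neg_ne_zero.2)) h
  rw [abs_neg] at key
  have e0 : (((S2 ^ 4)⁻¹) • v).1 0 = v.1 0 := by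
    rw [smul_val, S24inv]; norm_num
  have e1 : (((S2 ^ 4)⁻¹) • v).1 1 = v.1 1 - 4 * -(v.1 0) := by
    rw [smul_val, S24inv]; norm_num; ring
  rw [YY1, Set.mem_setOf_eq, e0, e1]
  exact ⟨key.1, by nlinarith [key.2]⟩

lemma pingpong : Function.Injective (FreeGroup.lift aU) := by
  apply FreeGroup.injective_lift_of_ping_pong aU XX YY
  · -- nonempty
    intro i
    fin_cases i
    · refine ⟨⟨![1, 0], fun h => by simpa using congrFun h 0⟩, ?_⟩
      show _ ∈ XX0
      constructor <;> norm_num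
    · refine ⟨⟨![0, 1], fun h => by simpa using congrFun h 1⟩, ?_⟩
      show _ ∈ XX1
      constructor <;> norm_num
  · -- X disjoint
    intro i j hij
    fin_cases i <;> fin_cases j <;> first
      | exact absurd rfl hij
      | · show Disjoint XX0 XX1
          rw [Set.disjoint_left]
          rintro v ⟨h1, _⟩ ⟨h3, _⟩
          omega
      | · show Disjoint XX1 XX0
          rw [Set.disjoint_left]
          rintro v ⟨h1, _⟩ ⟨h3, _⟩
          omega
  · -- Y disjoint
    intro i j hij
    fin_cases i <;> fin_cases j <;> first
      | exact absurd rfl hij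
      | · show Disjoint YY0 YY1
          rw [Set.disjoint_left]
          rintro v ⟨h1, _⟩ ⟨h3, _⟩
          omega
      | · show Disjoint YY1 YY0
          rw [Set.disjoint_left]
          rintro v ⟨h1, _⟩ ⟨h3, _⟩
          omega
  · -- X,Y disjoint
    intro i j
    fin_cases i <;> fin_cases j
    · show Disjoint XX0 YY0
      rw [Set.disjoint_left]
      rintro v ⟨_, h2⟩ ⟨_, h4⟩
      omega
    · show Disjoint XX0 YY1
      rw [Set.disjoint_left]
      rintro v ⟨h1, _⟩ ⟨h3, _⟩
      omega
    · show Disjoint XX1 YY0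
      rw [Set.disjoint_left]
      rintro v ⟨h1, _⟩ ⟨h3, _⟩
      omega
    · show Disjoint XX1 YY1
      rw [Set.disjoint_left]
      rintro v ⟨_, h2⟩ ⟨_, h4⟩
      omega
  · -- hX
    intro i
    fin_cases i
    · show (S1 ^ 4) • YY0ᶜ ⊆ XX0
      exact hX0
    · show (S2 ^ 4) • YY1ᶜ ⊆ XX1
      exact hX1
  · -- hY
    intro i
    fin_cases i
    · show ((S1 ^ 4)⁻¹) • XX0ᶜ ⊆ YY0
      exact hY0
    · show ((S2 ^ 4)⁻¹) • XX1ᶜ ⊆ YY1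
      exact hY1

/-- The representation `B₃ → M2ˣ`. -/
def φ : B3 →* M2ˣ :=
  PresentedGroup.toGroup (f := fun i : Fin 2 => if i = 0 then S1 else S2) (by
    intro r hr
    rw [braidRel, Set.mem_singleton_iff] at hr
    subst hr
    simp only [map_mul, map_inv, FreeGroup.lift_apply_of]
    norm_num
    rw [show (S1 * S2 * S1 : M2ˣ) = S2 * S1 * S2 from braidS]
    group)

/-- The homomorphism `FG({c,d}) → B₃` with `f(c) = σ₁⁴` and `f(d) = σ₂⁴` is
injective; i.e. the subgroup of `B₃` generated by `σ₁⁴` and `σ₂⁴` is free of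
rank 2 (here `c = FreeGroup.of 0`, `d = FreeGroup.of 1`). -/
theorem f_injective :
    Function.Injective
      (FreeGroup.lift fun i : Fin 2 => if i = 0 then (σ 0) ^ 4 else (σ 1) ^ 4) := by
  have hc : φ.comp (FreeGroup.lift fun i : Fin 2 => if i = 0 then (σ 0) ^ 4 else (σ 1) ^ 4)
      = FreeGroup.lift aU := by
    ext i
    simp only [MonoidHom.comp_apply, FreeGroup.lift_apply_of]
    fin_cases i <;>
      simp [σ, φ, aU, map_pow, PresentedGroup.toGroup.of]
  have h2 : Function.Injective
      (⇑φ ∘ ⇑(FreeGroup.lift fun i : Fin 2 => if i = 0 then (σ 0) ^ 4 else (σ 1) ^ 4)) := by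
    rw [← MonoidHom.coe_comp, hc]
    exact pingpong
  exact Function.Injective.of_comp h2
end

section
/- For every n ≥ 3 there is a deterministic finite automaton P_n over a group alphabet Σ of size 2n, with n+2 states and 2n transitions, such that the unique word w accepted by P_n whose free-group reduction is the empty word has length exactly 2ⁿ. -/
/-- Run a partial DFA with transition function `δ` from state `q` on word `w`. -/
def pdfaRun {Q A : Type*} (δ : Q → A → Option Q) (q : Q) (w : List A) : Option Q :=
  w.foldl (fun s a => s.bind fun p => δ p a) (some q)

/-- A word is accepted if running it from the initial state ends in a final state. -/
def pdfaAccepts {Q A : Type*} (δ : Q → A → Option Q) (q₀ : Q) (F : Finset Q)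
    (w : List A) : Prop := ∃ qf ∈ F, pdfaRun δ q₀ w = some qf

namespace PowerAuto

/-! ### Generic partial DFA run lemmas -/

theorem run_none {Q A : Type*} (δ : Q → A → Option Q) (w : List A) :
    w.foldl (fun s a => s.bind fun p => δ p a) none = none := by
  induction w with
  | nil => rfl
  | cons a w ih => simpa using ih

theorem pdfaRun_cons {Q A : Type*} (δ : Q → A → Option Q) (q : Q) (a : A) (w : List A) :
    pdfaRun δ q (a :: w) = (δ q a).bind fun q' => pdfaRun δ q' w := by
  cases h : δ q a with
  | none => simp [pdfaRun, h, run_none]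
  | some q' => simp [pdfaRun, h]

/-! ### The inner walk relation over alphabet ℕ × Bool -/

def wseg (m : ℕ) : ℕ → List (ℕ × Bool) → ℕ → Prop
  | i, [], j => j = i
  | i, x :: s, j => i < m ∧ x.1 = i ∧ wseg m (if x.2 then 0 else i + 1) s j

/-- pair condition: a negative letter is followed by a strictly larger index -/
def Pc (x y : ℕ × Bool) : Prop := x.2 = false → x.1 < y.1

def Inv (j : ℕ) (τ : List (ℕ × Bool)) : Prop :=
  (∀ x ∈ τ.head?, j ≤ x.1) ∧ τ.Chain' Pc

theorem inv_reduce (m : ℕ) : ∀ (s : List (ℕ × Bool)) (i : ℕ),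
    wseg m i s m → Inv i (FreeGroup.reduce s) := by
  intro s
  induction s with
  | nil => intro i _; exact ⟨by simp, List.isChain_nil⟩
  | cons x s ih =>
    intro i hw
    obtain ⟨him, hx1, hws⟩ := hw
    have hIH := ih _ hws
    rw [FreeGroup.reduce.cons]
    cases hρ : FreeGroup.reduce s with
    | nil =>
      refine ⟨by simp [hx1], List.isChain_singleton _⟩
    | cons y t =>
      rw [hρ] at hIH
      obtain ⟨hhead, hchain⟩ := hIH
      have hy : (if x.2 then 0 else i + 1) ≤ y.1 := hhead y (by simp)
      change Inv i (if x.1 = y.1 ∧ x.2 = !y.2 then t else x :: y :: t)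
      by_cases hc : x.1 = y.1 ∧ x.2 = !y.2
      · rw [if_pos hc]
        constructor
        · intro z hz
          cases t with
          | nil => simp at hz
          | cons z' t' =>
            simp at hz
            subst hz
            have hP : Pc y z' := (List.isChain_cons_cons.mp hchain).1
            cases hb : x.2 with
            | true =>
              have : y.2 = false := by
                have := hc.2; rw [hb] at this
                simpa using this.symm
              have := hP this
              have hx1y : x.1 = y.1 := hc.1
              omega
            | false =>
              rw [hb] at hy
              simp at hy
              have hx1y : x.1 = y.1 := hc.1
              omega
        · exact (List.isChain_cons.mp hchain).2
      · rw [if_neg hc]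
        constructor
        · intro z hz; simp at hz; subst hz; omega
        · refine List.isChain_cons_cons.mpr ⟨?_, hchain⟩
          intro hxf
          rw [hxf] at hy
          simp at hy
          omega


theorem reduce_cons_inj {α : Type*} [DecidableEq α] (x : α × Bool) (s t : List (α × Bool))
    (h : FreeGroup.reduce (x :: s) = FreeGroup.reduce (x :: t)) :
    FreeGroup.reduce s = FreeGroup.reduce t := by
  rw [FreeGroup.reduce.cons, FreeGroup.reduce.cons] at h
  cases hs : FreeGroup.reduce s with
  | nil =>
    cases ht : FreeGroup.reduce t with
    | nil => rfl
    | cons y u =>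
      rw [hs, ht] at h
      change [x] = (if x.1 = y.1 ∧ x.2 = !y.2 then u else x :: y :: u) at h
      split_ifs at h with hc
      · exfalso
        have hy : y = (x.1, !x.2) := by
          refine Prod.ext hc.1.symm ?_
          rw [hc.2]; simp
        rw [← h] at ht
        exact FreeGroup.reduce.not (L₂ := []) (L₃ := []) (x := x.1) (b := !x.2)
          (by rw [ht, hy]; simp [Bool.not_not])
      · simp at h
  | cons y u =>
    cases ht : FreeGroup.reduce t with
    | nil =>
      rw [hs, ht] at h
      change (if x.1 = y.1 ∧ x.2 = !y.2 then u else x :: y :: u) = [x] at h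
      split_ifs at h with hc
      · exfalso
        have hy : y = (x.1, !x.2) := by
          refine Prod.ext hc.1.symm ?_
          rw [hc.2]; simp
        rw [h] at hs
        exact FreeGroup.reduce.not (L₂ := []) (L₃ := []) (x := x.1) (b := !x.2)
          (by rw [hs, hy]; simp [Bool.not_not])
      · simp at h
    | cons z v =>
      rw [hs, ht] at h
      change (if x.1 = y.1 ∧ x.2 = !y.2 then u else x :: y :: u)
           = (if x.1 = z.1 ∧ x.2 = !z.2 then v else x :: z :: v) at h
      split_ifs at h with hc hd hd
      · -- both pop : y = z = (x.1,!x.2), u = v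
        have hy : y = (x.1, !x.2) := by
          refine Prod.ext hc.1.symm ?_
          rw [hc.2]; simp
        have hz : z = (x.1, !x.2) := by
          refine Prod.ext hd.1.symm ?_
          rw [hd.2]; simp
        rw [hy, hz, h]
      · -- pop on s side, push on t side: u = x :: z :: v
        exfalso
        have hy : y = (x.1, !x.2) := by
          refine Prod.ext hc.1.symm ?_
          rw [hc.2]; simp
        rw [h] at hs
        exact FreeGroup.reduce.not (L₂ := []) (L₃ := z :: v) (x := x.1) (b := !x.2)
          (by rw [hs, hy]; simp [Bool.not_not])
      · exfalso
        have hz : z = (x.1, !x.2) := by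
          refine Prod.ext hd.1.symm ?_
          rw [hd.2]; simp
        rw [← h] at ht
        exact FreeGroup.reduce.not (L₂ := []) (L₃ := y :: u) (x := x.1) (b := !x.2)
          (by rw [ht, hz]; simp [Bool.not_not])
      · simpa using h


theorem reduce_cons_push {α : Type*} [DecidableEq α] (x : α × Bool) (s : List (α × Bool))
    (hno : ∀ z ∈ (FreeGroup.reduce s).head?, ¬(x.1 = z.1 ∧ x.2 = !z.2)) :
    FreeGroup.reduce (x :: s) = x :: FreeGroup.reduce s := by
  rw [FreeGroup.reduce.cons]
  cases hρ : FreeGroup.reduce s with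
  | nil => rfl
  | cons z v =>
    rw [hρ] at hno
    change (if x.1 = z.1 ∧ x.2 = !z.2 then v else x :: z :: v) = _
    rw [if_neg (hno z (by simp))]

theorem reduce_cons_pop {α : Type*} [DecidableEq α] (x : α × Bool) (s u : List (α × Bool))
    (hρ : FreeGroup.reduce s = (x.1, !x.2) :: u) :
    FreeGroup.reduce (x :: s) = u := by
  rw [FreeGroup.reduce.cons, hρ]
  change (if x.1 = (x.1, !x.2).1 ∧ x.2 = !(x.1, !x.2).2 then u else _) = u
  rw [if_pos ⟨rfl, by simp⟩]

theorem mixed_contra (m i : ℕ) (s t : List (ℕ × Bool))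
    (hs : wseg m 0 s m) (ht : wseg m (i + 1) t m) :
    FreeGroup.reduce (((i : ℕ), true) :: s) ≠ FreeGroup.reduce (((i : ℕ), false) :: t) := by
  intro h
  have Is := inv_reduce m s 0 hs
  have It := inv_reduce m t (i + 1) ht
  have htside : FreeGroup.reduce (((i : ℕ), false) :: t)
      = ((i : ℕ), false) :: FreeGroup.reduce t := by
    apply reduce_cons_push
    intro z hz hcontra
    have h1 := It.1 z hz
    have h2 : (i : ℕ) = z.1 := hcontra.1
    omega
  rw [htside] at h
  cases hρ : FreeGroup.reduce s with
  | nil =>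
    rw [FreeGroup.reduce.cons, hρ] at h
    change [((i : ℕ), true)] = _ at h
    simp at h
  | cons y u =>
    by_cases hc : (((i : ℕ), true) : ℕ × Bool).1 = y.1 ∧ (((i : ℕ), true) : ℕ × Bool).2 = !y.2
    · have hy2 : y.2 = false := by
        have h2 := hc.2
        cases hyy : y.2
        · rfl
        · rw [hyy] at h2; simp at h2
      have hy : y = ((i : ℕ), false) := Prod.ext hc.1.symm hy2
      have hpop := reduce_cons_pop ((i : ℕ), true) s u (by rw [hρ, hy]; rfl)
      rw [hpop] at h
      rw [hρ, hy, h] at Is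
      have hP : Pc ((i : ℕ), false) ((i : ℕ), false) := (List.isChain_cons_cons.mp Is.2).1
      exact absurd (hP rfl) (lt_irrefl i)
    · rw [reduce_cons_push _ _ (by rw [hρ]; intro z hz; simp at hz; subst hz; exact hc)] at h
      simp at h

theorem walk_reduce_inj (m : ℕ) : ∀ (s : List (ℕ × Bool)) (i : ℕ) (t : List (ℕ × Bool)),
    wseg m i s m → wseg m i t m →
    FreeGroup.reduce s = FreeGroup.reduce t → s = t := by
  intro s
  induction s with
  | nil =>
    intro i t hs ht h
    cases t with
    | nil => rfl
    | cons y t' =>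
      exfalso
      have hmi : m = i := hs
      obtain ⟨hlt, -, -⟩ := ht
      omega
  | cons x s' ih =>
    intro i t hs ht h
    obtain ⟨hlt, hx1, hs'⟩ := hs
    cases t with
    | nil =>
      exfalso
      have hmi : m = i := ht
      omega
    | cons y t' =>
      obtain ⟨-, hy1, ht'⟩ := ht
      obtain ⟨x1, x2⟩ := x
      obtain ⟨y1, y2⟩ := y
      simp only at hx1 hy1
      subst hx1
      subst hy1
      cases x2 <;> cases y2 <;> simp only [Bool.false_eq_true, if_false, if_true, ite_true, ite_false] at hs' ht'
      · -- both false
        have heq := reduce_cons_inj _ _ _ h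
        rw [ih _ t' hs' ht' heq]
      · -- x2 = false, y2 = true : mirror
        exact absurd h.symm (mixed_contra m y1 t' s' ht' hs')
      · exact absurd h (mixed_contra m y1 s' t' hs' ht')
      · have heq := reduce_cons_inj _ _ _ h
        rw [ih _ t' hs' ht' heq]


/-! ### The counting word -/

def Mw : ℕ → List (ℕ × Bool)
  | 0 => []
  | k + 1 => Mw k ++ (k, true) :: (Mw k ++ [(k, false)])

theorem wseg_append (m : ℕ) : ∀ (u v : List (ℕ × Bool)) (i l j : ℕ),
    wseg m i u l → wseg m l v j → wseg m i (u ++ v) j := by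
  intro u
  induction u with
  | nil =>
    intro v i l j hu hv
    have : l = i := hu
    subst this
    simpa using hv
  | cons x u ih =>
    intro v i l j hu hv
    obtain ⟨h1, h2, h3⟩ := hu
    exact ⟨h1, h2, ih v _ l j h3 hv⟩

theorem wseg_Mw (m : ℕ) : ∀ k, k ≤ m → wseg m 0 (Mw k) k := by
  intro k
  induction k with
  | zero => intro _; rfl
  | succ k ih =>
    intro hk
    have hk' : k ≤ m := by omega
    have h1 := ih hk'
    have h2 : wseg m k ((k, true) :: (Mw k ++ [(k, false)])) (k + 1) := by
      refine ⟨by omega, rfl, ?_⟩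
      simp only [if_true]
      exact wseg_append m (Mw k) [(k, false)] 0 k (k + 1) h1
        ⟨by omega, rfl, by simp [wseg]⟩
    exact wseg_append m (Mw k) _ 0 k (k + 1) h1 h2

theorem mk_pair (k : ℕ) : FreeGroup.mk [(k, true), (k, false)] = 1 := by
  rw [← FreeGroup.toWord_eq_nil_iff, FreeGroup.toWord_mk]
  rw [FreeGroup.reduce.cons]
  rw [FreeGroup.reduce_singleton]
  change (if k = k ∧ true = !false then ([] : List (ℕ × Bool)) else _) = []
  rw [if_pos ⟨rfl, by simp⟩]

theorem mk_Mw : ∀ k, FreeGroup.mk (Mw k) = 1 := by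
  intro k
  induction k with
  | zero => rfl
  | succ k ih =>
    show FreeGroup.mk (Mw k ++ (k, true) :: (Mw k ++ [(k, false)])) = 1
    rw [show ((k, true) :: (Mw k ++ [(k, false)]))
        = ([(k, true)] ++ Mw k) ++ [(k, false)] by simp]
    rw [← FreeGroup.mul_mk, ← FreeGroup.mul_mk, ← FreeGroup.mul_mk, ih]
    simpa [FreeGroup.mul_mk] using mk_pair k

theorem len_Mw : ∀ k, (Mw k).length + 2 = 2 ^ (k + 1) := by
  intro k
  induction k with
  | zero => rfl
  | succ k ih =>
    have : (Mw (k + 1)).length = (Mw k).length + (Mw k).length + 2 := by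
      simp [Mw]; omega
    rw [this]
    have h2 : 2 ^ (k + 1 + 1) = 2 ^ (k + 1) + 2 ^ (k + 1) := by ring
    omega

theorem reduce_Mw (k : ℕ) : FreeGroup.reduce (Mw k) = [] := by
  have := mk_Mw k
  rw [← FreeGroup.toWord_eq_nil_iff, FreeGroup.toWord_mk] at this
  exact this


/-! ### reduce commutes with injective relabeling -/

theorem reduce_map {α β : Type*} [DecidableEq α] [DecidableEq β] {f : α → β}
    (hf : Function.Injective f) :
    ∀ w : List (α × Bool),
      FreeGroup.reduce (w.map (Prod.map f id)) = (FreeGroup.reduce w).map (Prod.map f id) := by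
  intro w
  induction w with
  | nil => rfl
  | cons x w ih =>
    rw [List.map_cons, FreeGroup.reduce.cons, FreeGroup.reduce.cons, ih]
    cases hρ : FreeGroup.reduce w with
    | nil => rfl
    | cons y t =>
      rw [List.map_cons]
      change (if (Prod.map f id x).1 = (Prod.map f id y).1 ∧
            (Prod.map f id x).2 = !(Prod.map f id y).2
          then t.map (Prod.map f id)
          else Prod.map f id x :: Prod.map f id y :: t.map (Prod.map f id))
        = (if x.1 = y.1 ∧ x.2 = !y.2 then t else x :: y :: t).map (Prod.map f id)
      by_cases hc : x.1 = y.1 ∧ x.2 = !y.2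
      · rw [if_pos ⟨congrArg f hc.1, hc.2⟩, if_pos hc]
      · rw [if_neg (fun hcc => hc ⟨hf hcc.1, hcc.2⟩), if_neg hc]
        simp

/-! ### The automaton over `Fin n × Bool` -/

def ι (n : ℕ) : Fin n × Bool → ℕ × Bool := fun a => (a.1.val, a.2)

theorem ι_inj (n : ℕ) : Function.Injective (ι n) := by
  rintro ⟨a1, a2⟩ ⟨b1, b2⟩ h
  simp only [ι, Prod.mk.injEq] at h
  exact Prod.ext (Fin.ext h.1) h.2

def src (n : ℕ) (a : Fin n × Bool) : Fin (n + 2) :=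
  if a.1.val = n - 1 then (if a.2 then ⟨0, by omega⟩ else ⟨n, by omega⟩)
  else ⟨a.1.val + 1, by have := a.1.isLt; omega⟩

def tgt (n : ℕ) (a : Fin n × Bool) : Fin (n + 2) :=
  if a.2 then ⟨1, by omega⟩
  else if a.1.val = n - 1 then ⟨n + 1, by omega⟩
  else ⟨a.1.val + 2, by have := a.1.isLt; omega⟩

theorem src_val (n : ℕ) (a : Fin n × Bool) :
    (src n a).val = if a.1.val = n - 1 then (if a.2 then 0 else n) else a.1.val + 1 := by
  unfold src; split_ifs <;> rfl

theorem tgt_val (n : ℕ) (a : Fin n × Bool) :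
    (tgt n a).val = if a.2 then 1 else (if a.1.val = n - 1 then n + 1 else a.1.val + 2) := by
  unfold tgt; split_ifs <;> rfl

def del (n : ℕ) (q : Fin (n + 2)) (a : Fin n × Bool) : Option (Fin (n + 2)) :=
  if q = src n a then some (tgt n a) else none

theorem del_none (n : ℕ) {q : Fin (n + 2)} {a : Fin n × Bool} (h : ¬ q = src n a) :
    del n q a = none := if_neg h

theorem del_eq (n : ℕ) {q : Fin (n + 2)} {a : Fin n × Bool} (h : q = src n a) :
    del n q a = some (tgt n a) := if_pos h

theorem card_del (n : ℕ) :
    (Finset.univ.filter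
      (fun p : Fin (n + 2) × (Fin n × Bool) => (del n p.1 p.2).isSome)).card = 2 * n := by
  have himg : (Finset.univ.filter
      (fun p : Fin (n + 2) × (Fin n × Bool) => (del n p.1 p.2).isSome))
      = Finset.univ.image (fun a : Fin n × Bool => (src n a, a)) := by
    ext p
    simp only [Finset.mem_filter, Finset.mem_univ, true_and, Finset.mem_image]
    constructor
    · intro hp
      refine ⟨p.2, ?_⟩
      by_cases hq : p.1 = src n p.2
      · rw [← hq]
      · rw [del_none n hq] at hp
        simp at hp
    · rintro ⟨a, rfl⟩
      rw [del_eq n rfl]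
      rfl
  rw [himg, Finset.card_image_of_injective _ (fun a b hab => congrArg Prod.snd hab)]
  simp [Fintype.card_prod]
  omega

theorem run_dead (n : ℕ) (w : List (Fin n × Bool)) :
    pdfaRun (del n) ⟨n + 1, by omega⟩ w = some ⟨n + 1, by omega⟩ ↔ w = [] := by
  cases w with
  | nil => simp [pdfaRun]
  | cons a w =>
    rw [pdfaRun_cons, del_none]
    · simp
    · intro h
      have hv := congrArg Fin.val h
      rw [src_val] at hv
      have := a.1.isLt
      simp only at hv
      split_ifs at hv <;> omega


theorem run_middle (n : ℕ) (hn : 3 ≤ n) :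
    ∀ (w : List (Fin n × Bool)) (i : ℕ) (_hi : i ≤ n - 1),
    (pdfaRun (del n) ⟨i + 1, by omega⟩ w = some ⟨n + 1, by omega⟩) ↔
    (∃ u, w = u ++ [(⟨n - 1, by omega⟩, false)] ∧ wseg (n - 1) i (u.map (ι n)) (n - 1)) := by
  intro w
  induction w with
  | nil =>
    intro i hi
    constructor
    · intro h
      simp only [pdfaRun, List.foldl_nil, Option.some.injEq] at h
      have := congrArg Fin.val h
      simp only at this
      omega
    · rintro ⟨u, hu, -⟩
      exact absurd hu (by simp)
  | cons a w ih =>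
    intro i hi
    rw [pdfaRun_cons]
    have hka := a.1.isLt
    by_cases hq : (⟨i + 1, by omega⟩ : Fin (n + 2)) = src n a
    · -- transition exists
      rw [del_eq n hq, Option.bind_some]
      have hqv := congrArg Fin.val hq
      rw [src_val] at hqv
      simp only at hqv
      by_cases hk : a.1.val = n - 1
      · -- then a.2 = false and i = n - 1
        rw [if_pos hk] at hqv
        cases hb : a.2 with
        | true => rw [hb, if_pos rfl] at hqv; omega
        | false =>
          rw [hb, if_neg (by simp)] at hqv
          have hieq : i = n - 1 := by omega
          have htg : tgt n a = ⟨n + 1, by omega⟩ := by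
            apply Fin.ext
            rw [tgt_val, hb, if_neg (by simp), if_pos hk]
          rw [htg, run_dead]
          constructor
          · intro hwnil
            refine ⟨[], ?_, ?_⟩
            · rw [hwnil]
              simp only [List.nil_append, List.cons.injEq, and_true]
              refine Prod.ext (Fin.ext ?_) hb
              simpa using hk
            · simpa [wseg] using hieq.symm
          · rintro ⟨u, hu, hwseg⟩
            cases u with
            | nil =>
              simp only [List.nil_append, List.cons.injEq] at hu
              exact hu.2
            | cons c u' =>
              exfalso
              simp only [List.cons_append, List.cons.injEq] at hu
              rw [List.map_cons] at hwseg
              obtain ⟨hlt, -, -⟩ := hwseg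
              omega
      · -- a.1.val < n - 1, i = a.1.val
        rw [if_neg hk] at hqv
        have hik : i = a.1.val := by omega
        have hkil : a.1.val < n - 1 := by
          rcases Nat.lt_or_ge a.1.val (n - 1) with h | h
          · exact h
          · exfalso; exact hk (by omega)
        have htg : tgt n a = ⟨(if a.2 then 0 else i + 1) + 1, by split <;> omega⟩ := by
          apply Fin.ext
          rw [tgt_val]
          cases hb : a.2 with
          | true => simp
          | false => rw [if_neg (by simp), if_neg hk]; simp; omega
        rw [htg]
        have hi' : (if a.2 then 0 else i + 1) ≤ n - 1 := by split <;> omega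
        rw [ih (if a.2 then 0 else i + 1) hi']
        constructor
        · rintro ⟨u', hu', hw'⟩
          refine ⟨a :: u', by rw [hu']; simp, ?_⟩
          rw [List.map_cons]
          exact ⟨by omega, hik.symm, by exact hw'⟩
        · rintro ⟨u, hu, hw⟩
          cases u with
          | nil =>
            exfalso
            simp only [List.nil_append, List.cons.injEq] at hu
            have := congrArg (fun x => (Prod.fst x).val) hu.1
            simp only at this
            omega
          | cons c u' =>
            simp only [List.cons_append, List.cons.injEq] at hu
            obtain ⟨hc, hu'⟩ := hu
            subst hc
            rw [List.map_cons] at hw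
            obtain ⟨-, -, hw3⟩ := hw
            exact ⟨u', hu', hw3⟩
    · -- no transition
      rw [del_none n hq, Option.bind_none]
      constructor
      · intro h; simp at h
      · rintro ⟨u, hu, hw⟩
        exfalso
        apply hq
        cases u with
        | nil =>
          simp only [List.nil_append, List.cons.injEq] at hu
          have hii : (n - 1 : ℕ) = i := by simpa [wseg] using hw
          have h1 : a.1.val = n - 1 := by rw [hu.1]
          have h2 : a.2 = false := by rw [hu.1]
          apply Fin.ext
          rw [src_val, if_pos h1, h2, if_neg (by simp)]
          show i + 1 = n
          omega
        | cons c u' =>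
          simp only [List.cons_append, List.cons.injEq] at hu
          rw [List.map_cons] at hw
          obtain ⟨hlt, hc1, -⟩ := hw
          have : c.1.val = i := hc1
          have ha1 : a.1.val = i := by rw [hu.1]; exact this
          apply Fin.ext
          rw [src_val, if_neg (by omega)]
          show i + 1 = a.1.val + 1
          omega


/-! ### Fin-world counting word and glue lemmas -/

open Fin.NatCast in
def MwF (n : ℕ) [NeZero n] : ℕ → List (Fin n × Bool)
  | 0 => []
  | k + 1 => MwF n k ++ ((k : Fin n), true) :: (MwF n k ++ [((k : Fin n), false)])

open Fin.NatCast in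
theorem map_MwF (n : ℕ) [NeZero n] : ∀ k, k ≤ n → (MwF n k).map (ι n) = Mw k := by
  intro k
  induction k with
  | zero => intro _; rfl
  | succ k ih =>
    intro hk
    have hcast : ((k : Fin n) : ℕ) = k := by
      rw [Fin.val_natCast]
      exact Nat.mod_eq_of_lt (by omega)
    simp only [MwF, Mw, List.map_append, List.map_cons, ih (by omega), List.map_nil]
    simp [ι, hcast]

theorem ι_eq_prodmap (n : ℕ) : ι n = Prod.map (Fin.val : Fin n → ℕ) id := by
  funext a
  rfl

theorem mk_one_iff_reduce_nil {α : Type*} [DecidableEq α] (w : List (α × Bool)) :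
    FreeGroup.mk w = 1 ↔ FreeGroup.reduce w = [] := by
  rw [← FreeGroup.toWord_eq_nil_iff, FreeGroup.toWord_mk]

theorem finmk_iff (n : ℕ) (w : List (Fin n × Bool)) :
    FreeGroup.mk w = 1 ↔ FreeGroup.mk (w.map (ι n)) = 1 := by
  rw [mk_one_iff_reduce_nil, mk_one_iff_reduce_nil, ι_eq_prodmap,
    reduce_map (fun a b h => Fin.ext h)]
  simp

theorem conj_iff (a : ℕ) (W : List (ℕ × Bool)) :
    FreeGroup.mk ((a, true) :: (W ++ [(a, false)])) = 1 ↔ FreeGroup.mk W = 1 := by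
  have hsplit : ((a, true) :: (W ++ [(a, false)]) : List (ℕ × Bool))
      = ([(a, true)] ++ W) ++ [(a, false)] := by simp
  rw [hsplit, ← FreeGroup.mul_mk, ← FreeGroup.mul_mk]
  have hinv : FreeGroup.mk [((a : ℕ), false)] = (FreeGroup.mk [((a : ℕ), true)])⁻¹ := by
    rw [FreeGroup.inv_mk]
    simp [FreeGroup.invRev]
  rw [hinv, mul_inv_eq_one]
  constructor
  · intro h
    have h2 := h.symm
    rwa [eq_comm, mul_eq_left] at h2
  · intro h
    rw [h, mul_one]

end PowerAuto


/-- For every `n ≥ 3` there is a DFA over a group alphabet of size `2n`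
(letters `Fin n × Bool`), with `n + 2` states and `2n` transitions, such that the
unique accepted word whose free-group reduction is empty has length exactly `2ⁿ`. -/
theorem power_automaton (n : ℕ) (hn : 3 ≤ n) :
    ∃ (δ : Fin (n + 2) → Fin n × Bool → Option (Fin (n + 2)))
      (q₀ : Fin (n + 2)) (F : Finset (Fin (n + 2))) (w₀ : List (Fin n × Bool)),
      (Finset.univ.filter
        (fun p : Fin (n + 2) × (Fin n × Bool) => (δ p.1 p.2).isSome)).card = 2 * n ∧
      w₀.length = 2 ^ n ∧
      ∀ w : List (Fin n × Bool),
        (pdfaAccepts δ q₀ F w ∧ FreeGroup.mk w = 1) ↔ w = w₀ := by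
  haveI : NeZero n := ⟨by omega⟩
  refine ⟨PowerAuto.del n, ⟨0, by omega⟩, {⟨n + 1, by omega⟩},
    ((⟨n - 1, by omega⟩ : Fin n), true) ::
      (PowerAuto.MwF n (n - 1) ++ [((⟨n - 1, by omega⟩ : Fin n), false)]),
    PowerAuto.card_del n, ?_, ?_⟩
  · have hlen := PowerAuto.len_Mw (n - 1)
    have hmaplen : (PowerAuto.MwF n (n - 1)).length = (PowerAuto.Mw (n - 1)).length := by
      rw [← PowerAuto.map_MwF n (n - 1) (by omega), List.length_map]
    have h2 : n - 1 + 1 = n := by omega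
    rw [h2] at hlen
    simp only [List.length_cons, List.length_append, List.length_nil]
    omega
  · intro w
    constructor
    · rintro ⟨⟨qf, hqf, hrun⟩, hmk⟩
      rw [Finset.mem_singleton] at hqf
      subst hqf
      cases w with
      | nil =>
        exfalso
        simp only [pdfaRun, List.foldl_nil, Option.some.injEq] at hrun
        have := congrArg Fin.val hrun
        simp at this
      | cons a w' =>
        rw [PowerAuto.pdfaRun_cons] at hrun
        by_cases hq : (⟨0, by omega⟩ : Fin (n + 2)) = PowerAuto.src n a
        · rw [PowerAuto.del_eq n hq, Option.bind_some] at hrun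
          have hqv := congrArg Fin.val hq
          rw [PowerAuto.src_val] at hqv
          simp only at hqv
          have hka := a.1.isLt
          have ha1 : a.1.val = n - 1 ∧ a.2 = true := by
            by_cases hk : a.1.val = n - 1
            · rw [if_pos hk] at hqv
              cases hb : a.2 with
              | false => rw [hb, if_neg (by simp)] at hqv; omega
              | true => exact ⟨hk, rfl⟩
            · rw [if_neg hk] at hqv; omega
          have htgt : PowerAuto.tgt n a = ⟨1, by omega⟩ := by
            apply Fin.ext
            rw [PowerAuto.tgt_val, if_pos ha1.2]
          rw [htgt] at hrun
          obtain ⟨u, hu, hwseg⟩ := (PowerAuto.run_middle n hn w' 0 (by omega)).mp hrun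
          rw [PowerAuto.finmk_iff] at hmk
          rw [hu] at hmk ⊢
          have hmapw : ((a :: (u ++ [((⟨n - 1, by omega⟩ : Fin n), false)])).map (PowerAuto.ι n))
              = ((n - 1 : ℕ), true) ::
                ((u.map (PowerAuto.ι n)) ++ [((n - 1 : ℕ), false)]) := by
            simp [PowerAuto.ι, ha1.1, ha1.2]
          rw [hmapw, PowerAuto.conj_iff, PowerAuto.mk_one_iff_reduce_nil] at hmk
          have huniq := PowerAuto.walk_reduce_inj (n - 1) (u.map (PowerAuto.ι n)) 0
            (PowerAuto.Mw (n - 1)) hwseg (PowerAuto.wseg_Mw (n - 1) (n - 1) le_rfl)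
            (by rw [hmk, PowerAuto.reduce_Mw])
          have hu2 : u = PowerAuto.MwF n (n - 1) :=
            (List.map_injective_iff.mpr (PowerAuto.ι_inj n))
              (by rw [huniq, PowerAuto.map_MwF n (n - 1) (by omega)])
          have ha : a = ((⟨n - 1, by omega⟩ : Fin n), true) :=
            Prod.ext (Fin.ext ha1.1) ha1.2
          rw [ha, hu2]
        · rw [PowerAuto.del_none n hq, Option.bind_none] at hrun
          simp at hrun
    · intro hw
      subst hw
      constructor
      · refine ⟨⟨n + 1, by omega⟩, Finset.mem_singleton_self _, ?_⟩
        rw [PowerAuto.pdfaRun_cons]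
        have hsrc : (⟨0, by omega⟩ : Fin (n + 2))
            = PowerAuto.src n ((⟨n - 1, by omega⟩ : Fin n), true) := by
          apply Fin.ext
          rw [PowerAuto.src_val]
          simp
        rw [PowerAuto.del_eq n hsrc, Option.bind_some]
        have htgt : PowerAuto.tgt n ((⟨n - 1, by omega⟩ : Fin n), true) = ⟨1, by omega⟩ := by
          apply Fin.ext
          rw [PowerAuto.tgt_val]
          simp
        rw [htgt]
        apply (PowerAuto.run_middle n hn _ 0 (by omega)).mpr
        exact ⟨PowerAuto.MwF n (n - 1), rfl,
          by rw [PowerAuto.map_MwF n (n - 1) (by omega)]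
             exact PowerAuto.wseg_Mw (n - 1) (n - 1) le_rfl⟩
      · rw [PowerAuto.finmk_iff]
        have hmapw : (((((⟨n - 1, by omega⟩ : Fin n), true)) ::
              (PowerAuto.MwF n (n - 1) ++ [((⟨n - 1, by omega⟩ : Fin n), false)])).map
                (PowerAuto.ι n))
            = ((n - 1 : ℕ), true) ::
              (((PowerAuto.MwF n (n - 1)).map (PowerAuto.ι n)) ++ [((n - 1 : ℕ), false)]) := by
          simp [PowerAuto.ι]
        rw [hmapw, PowerAuto.conj_iff, PowerAuto.mk_one_iff_reduce_nil,
          PowerAuto.map_MwF n (n - 1) (by omega), PowerAuto.reduce_Mw]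
end
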